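/- arXiv:1404.1457 — 3 statements merged into one kernel-verified Lean document; each statement's English description precedes it below -/
import Mathlib

section
/- Let π be a permutation of {1,…,n}, and let 1 ≤ a < b ≤ n. If b precedes a in π (i.e. π^{-1}(b) < π^{-1}(a)), then a precedes b in T(π) (i.e. T(π)^{-1}(a) < T(π)^{-1}(b)). -/
private theorem length_takeWhile_ne_lt {w : List ℕ} {m : ℕ} (hm : m ∈ w) :
    (w.takeWhile (· ≠ m)).length < w.length := by
  induction w with
  | nil => cases hm
  | cons a as ih =>
    by_cases ha : a = m
    · subst ha
      simp [List.takeWhile_cons]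
    · rw [List.takeWhile_cons_of_pos (by simpa using ha)]
      have hm' : m ∈ as := by
        rcases List.mem_cons.mp hm with h | h
        · exact absurd h.symm ha
        · exact h
      simpa using Nat.succ_lt_succ (ih hm')

private theorem length_tail_dropWhile_lt {w : List ℕ} (hw : w ≠ []) (p : ℕ → Bool) :
    ((w.dropWhile p).tail).length < w.length := by
  cases hd : w.dropWhile p with
  | nil => simpa using List.length_pos_iff.mpr hw
  | cons x xs =>
    have h1 : (x :: xs).length ≤ w.length := by
      rw [← hd]; exact (List.dropWhile_sublist p).length_le
    simp only [List.tail_cons]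
    exact lt_of_lt_of_le (by simp) h1

/-- The classical stack sort operator on words: `S(ε) = ε` and `S(L m R) = S(L) S(R) m`,
where `m` is the largest entry of the word `L m R`. -/
def stackSort : List ℕ → List ℕ
  | [] => []
  | a :: as =>
    let m := ((a :: as).max?).getD 0
    stackSort ((a :: as).takeWhile (· ≠ m)) ++
      stackSort (((a :: as).dropWhile (· ≠ m)).tail) ++ [m]
termination_by w => w.length
decreasing_by
  · refine length_takeWhile_ne_lt ?_
    have : (a :: as).max? = some (((a :: as).max?).getD 0) := by
      cases h : (a :: as).max? with
      | none => simp [List.max?_eq_none_iff] at h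
      | some b => simp
    exact List.max?_mem this
  · exact length_tail_dropWhile_lt (by simp) _

/-- The revstack sort operator `T = S ∘ rev`. -/
def revstackSort (w : List ℕ) : List ℕ := stackSort w.reverse

private theorem getD_max?_mem {w : List ℕ} (hw : w ≠ []) : (w.max?).getD 0 ∈ w := by
  have : w.max? = some ((w.max?).getD 0) := by
    cases h : w.max? with
    | none => rw [List.max?_eq_none_iff] at h; exact absurd h hw
    | some b => simp
  exact List.max?_mem this

private theorem le_getD_max? {w : List ℕ} {z : ℕ} (hz : z ∈ w) : z ≤ (w.max?).getD 0 := by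
  have h : w.max? = some ((w.max?).getD 0) := by
    cases h : w.max? with
    | none => rw [List.max?_eq_none_iff] at h; subst h; cases hz
    | some b => simp
  exact (List.max?_le_iff h).1 le_rfl z hz

private theorem dropWhile_ne_eq {w : List ℕ} {m : ℕ} (hm : m ∈ w) :
    w.dropWhile (· ≠ m) = m :: (w.dropWhile (· ≠ m)).tail := by
  cases hd : w.dropWhile (· ≠ m) with
  | nil =>
    exfalso
    have := List.dropWhile_eq_nil_iff.mp hd m hm
    simp at this
  | cons x xs =>
    have hne : w.dropWhile (· ≠ m) ≠ [] := by rw [hd]; simp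
    have hx := List.head_dropWhile_not (· ≠ m) hne
    have hhead : (w.dropWhile (· ≠ m)).head hne = x :=
      (List.head_eq_iff_head?_eq_some hne).mpr (by rw [hd]; rfl)
    rw [hhead] at hx
    simp only [ne_eq, decide_not, Bool.not_eq_false, decide_eq_true_eq,
      Bool.not_eq_false', decide_eq_false_iff_not, not_not] at hx
    subst hx
    simp

private theorem decomp_eq {w : List ℕ} {m : ℕ} (hm : m ∈ w) :
    w = w.takeWhile (· ≠ m) ++ m :: (w.dropWhile (· ≠ m)).tail := by
  conv_lhs => rw [← List.takeWhile_append_dropWhile (p := (· ≠ m)) (l := w)]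
  rw [← dropWhile_ne_eq hm]

private theorem stackSort_cons (x : ℕ) (xs : List ℕ) :
    stackSort (x :: xs) =
      stackSort ((x :: xs).takeWhile (· ≠ ((x :: xs).max?).getD 0)) ++
      stackSort (((x :: xs).dropWhile (· ≠ ((x :: xs).max?).getD 0)).tail) ++
      [((x :: xs).max?).getD 0] := by
  rw [stackSort]

private theorem stackSort_perm_aux : ∀ N : ℕ, ∀ w : List ℕ, w.length ≤ N →
    (stackSort w).Perm w := by
  intro N
  induction N with
  | zero =>
    intro w hw
    have : w = [] := List.eq_nil_of_length_eq_zero (Nat.le_zero.mp hw)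
    subst this; simp [stackSort]
  | succ N ih =>
    rintro (_ | ⟨x, xs⟩) hw
    · simp [stackSort]
    · rw [stackSort_cons]
      have hm : ((x :: xs).max?).getD 0 ∈ (x :: xs) := getD_max?_mem (by simp)
      have hLlen : ((x :: xs).takeWhile (· ≠ ((x :: xs).max?).getD 0)).length ≤ N :=
        Nat.lt_succ_iff.mp (lt_of_lt_of_le (length_takeWhile_ne_lt hm) hw)
      have hRlen : (((x :: xs).dropWhile (· ≠ ((x :: xs).max?).getD 0)).tail).length ≤ N :=
        Nat.lt_succ_iff.mp (lt_of_lt_of_le (length_tail_dropWhile_lt (by simp) _) hw)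
      have h1 := (ih _ hLlen).append (ih _ hRlen)
      refine ((h1.append (List.Perm.refl _)).trans ?_)
      conv_rhs => rw [decomp_eq hm]
      rw [List.append_assoc]
      exact (List.Perm.refl _).append List.perm_append_comm

private theorem stackSort_perm (w : List ℕ) : (stackSort w).Perm w :=
  stackSort_perm_aux w.length w le_rfl

private theorem stackSort_mono_aux : ∀ N : ℕ, ∀ w : List ℕ, w.length ≤ N → w.Nodup →
    ∀ a b : ℕ, a ∈ w → b ∈ w → a < b → w.idxOf a < w.idxOf b →
    (stackSort w).idxOf a < (stackSort w).idxOf b := by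
  intro N
  induction N with
  | zero =>
    intro w hw _ a b ha _ _ _
    have : w = [] := List.eq_nil_of_length_eq_zero (Nat.le_zero.mp hw)
    subst this; cases ha
  | succ N ih =>
    rintro (_ | ⟨x, xs⟩) hw hnd a b ha hb hab hidx
    · cases ha
    · rw [stackSort_cons, List.append_assoc]
      set m := ((x :: xs).max?).getD 0 with hmdef
      set L := (x :: xs).takeWhile (· ≠ m) with hLdef
      set R := ((x :: xs).dropWhile (· ≠ m)).tail with hRdef
      have hm : m ∈ (x :: xs) := hmdef ▸ getD_max?_mem (by simp)
      have hw_eq : x :: xs = L ++ m :: R := by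
        rw [hLdef, hRdef, hmdef]; exact decomp_eq (hmdef ▸ hm)
      have hLlen : L.length ≤ N := by
        have := length_takeWhile_ne_lt (w := x :: xs) (m := m) hm
        rw [← hLdef] at this; omega
      have hRlen : R.length ≤ N := by
        have := length_tail_dropWhile_lt (w := x :: xs) (by simp) (· ≠ m)
        rw [← hRdef] at this; omega
      -- nodup decomposition
      rw [hw_eq, List.nodup_append] at hnd
      obtain ⟨hLnd, hmRnd, hdisj⟩ := hnd
      replace hdisj : ∀ {z}, z ∈ L → z ∈ m :: R → False := fun h1 h2 => hdisj _ h1 _ h2 rfl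
      have hmR : m ∉ R := (List.nodup_cons.mp hmRnd).1
      have hRnd : R.Nodup := (List.nodup_cons.mp hmRnd).2
      have hmL : m ∉ L := fun h => (hdisj h) (List.mem_cons_self)
      -- bounds
      have hbm : b ≤ m := hmdef ▸ le_getD_max? hb
      have ham : a ≠ m := by omega
      -- membership in pieces
      rw [hw_eq, List.mem_append] at ha hb
      rw [hw_eq] at hidx
      -- stackSort membership
      have memSL : ∀ z, z ∈ stackSort L ↔ z ∈ L := fun z => (stackSort_perm L).mem_iff
      have memSR : ∀ z, z ∈ stackSort R ↔ z ∈ R := fun z => (stackSort_perm R).mem_iff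
      have ha' : a ∈ L ∨ a ∈ R := by
        rcases ha with h | h
        · exact Or.inl h
        · rcases List.mem_cons.mp h with h | h
          · exact absurd h ham
          · exact Or.inr h
      rcases ha' with haL | haR
      · -- a ∈ L
        have haSL : a ∈ stackSort L := (memSL a).mpr haL
        have goalL : (stackSort L ++ (stackSort R ++ [m])).idxOf a = (stackSort L).idxOf a :=
          List.idxOf_append_of_mem haSL
        rw [goalL]
        have haLt : (stackSort L).idxOf a < (stackSort L).length :=
          List.idxOf_lt_length_iff.mpr haSL
        rcases hb with hbL | hbmR
        · -- b ∈ L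
          have hidx' : L.idxOf a < L.idxOf b := by
            rwa [List.idxOf_append_of_mem haL, List.idxOf_append_of_mem hbL] at hidx
          have := ih L hLlen hLnd a b haL hbL hab hidx'
          rw [List.idxOf_append_of_mem ((memSL b).mpr hbL)]
          exact this
        · rcases List.mem_cons.mp hbmR with hbm' | hbR
          · -- b = m
            subst hbm'
            have hmSL : m ∉ stackSort L := fun h => hmL ((memSL m).mp h)
            rw [List.idxOf_append_of_notMem hmSL]
            omega
          · -- b ∈ R
            have hbSL : b ∉ stackSort L := fun h => (hdisj ((memSL b).mp h)) (List.mem_cons_of_mem _ hbR)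
            rw [List.idxOf_append_of_notMem hbSL]
            omega
      · -- a ∈ R
        have haL : a ∉ L := fun h => (hdisj h) (List.mem_cons_of_mem _ haR)
        have hia : (L ++ m :: R).idxOf a = L.length + (R.idxOf a + 1) := by
          rw [List.idxOf_append_of_notMem haL, List.idxOf_cons_ne _ (Ne.symm ham)]
        rcases hb with hbL | hbmR
        · -- b ∈ L : contradiction
          exfalso
          have hib : (L ++ m :: R).idxOf b = L.idxOf b := List.idxOf_append_of_mem hbL
          have : L.idxOf b < L.length := List.idxOf_lt_length_iff.mpr hbL
          rw [hia, hib] at hidx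
          omega
        · rcases List.mem_cons.mp hbmR with hbm' | hbR
          · -- b = m : contradiction
            exfalso
            subst hbm'
            have hib : (L ++ m :: R).idxOf m = L.length := by
              simp [List.idxOf_append_of_notMem hmL, List.idxOf_cons_self]
            rw [hia, hib] at hidx
            omega
          · -- b ∈ R
            have hbne : b ≠ m := fun h => hmR (h ▸ hbR)
            have hib : (L ++ m :: R).idxOf b = L.length + (R.idxOf b + 1) := by
              rw [List.idxOf_append_of_notMem (fun h => (hdisj h) (List.mem_cons_of_mem _ hbR)),
                List.idxOf_cons_ne _ (Ne.symm hbne)]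
            rw [hia, hib] at hidx
            have hidx' : R.idxOf a < R.idxOf b := by omega
            have hres := ih R hRlen hRnd a b haR hbR hab hidx'
            have haSR : a ∈ stackSort R := (memSR a).mpr haR
            have hbSR : b ∈ stackSort R := (memSR b).mpr hbR
            have haSL : a ∉ stackSort L := fun h => haL ((memSL a).mp h)
            have hbSL : b ∉ stackSort L := fun h =>
              (hdisj ((memSL b).mp h)) (List.mem_cons_of_mem _ hbR)
            rw [List.idxOf_append_of_notMem haSL, List.idxOf_append_of_notMem hbSL,
              List.idxOf_append_of_mem haSR, List.idxOf_append_of_mem hbSR]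
            omega

private theorem stackSort_mono {w : List ℕ} (hnd : w.Nodup) {a b : ℕ}
    (ha : a ∈ w) (hb : b ∈ w) (hab : a < b) (hidx : w.idxOf a < w.idxOf b) :
    (stackSort w).idxOf a < (stackSort w).idxOf b :=
  stackSort_mono_aux w.length w le_rfl hnd a b ha hb hab hidx

private theorem indexOf_reverse_eq {w : List ℕ} (hnd : w.Nodup) {z : ℕ} (hz : z ∈ w) :
    w.reverse.idxOf z = w.length - 1 - w.idxOf z := by
  have hi : w.idxOf z < w.length := List.idxOf_lt_length_iff.mpr hz
  have h1 : w.length - 1 - w.idxOf z < w.reverse.length := by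
    rw [List.length_reverse]; omega
  have h2 : w.reverse[w.length - 1 - w.idxOf z]'h1 = z := by
    rw [List.getElem_reverse]
    have e : w.length - 1 - (w.length - 1 - w.idxOf z) = w.idxOf z := by omega
    simp only [e]
    exact List.getElem_idxOf hi
  have h3 := List.Nodup.idxOf_getElem (List.nodup_reverse.mpr hnd) (w.length - 1 - w.idxOf z) h1
  rw [h2] at h3
  exact h3



/-- The word of the identity permutation of `{1,…,n}`, namely `1 2 ⋯ n`. -/
def idPerm (n : ℕ) : List ℕ := List.range' 1 n

/-- `w` is (the word of) a permutation of `{1,…,n}`. -/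
def IsPermWord (n : ℕ) (w : List ℕ) : Prop := w.Perm (idPerm n)

/-- `x` precedes `y` in the word `w`, i.e. the position of `x` is smaller than that of `y`. -/
def Precedes (w : List ℕ) (x y : ℕ) : Prop := w.idxOf x < w.idxOf y

/-- `w` contains an occurrence of the pattern `132`: values `a < b < c` occurring in
the order `a, c, b`. -/
def Contains132 (w : List ℕ) : Prop :=
  ∃ a b c, a ∈ w ∧ b ∈ w ∧ c ∈ w ∧ a < b ∧ b < c ∧ Precedes w a c ∧ Precedes w c b

/-- `w` contains an occurrence of the pattern `2431`: values `a < b < c < d` occurring in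
the order `b, d, c, a`. -/
def Contains2431 (w : List ℕ) : Prop :=
  ∃ a b c d, a ∈ w ∧ b ∈ w ∧ c ∈ w ∧ d ∈ w ∧ a < b ∧ b < c ∧ c < d ∧
    Precedes w b d ∧ Precedes w d c ∧ Precedes w c a

/-- `w` contains an occurrence of the barred pattern `241 5̄ 3`: values `a < b < c < d`
occurring in the order `b, d, a, c` with no value `e > d` lying between `a` and `c` in `w`. -/
def ContainsBarred24153 (w : List ℕ) : Prop :=
  ∃ a b c d, a ∈ w ∧ b ∈ w ∧ c ∈ w ∧ d ∈ w ∧ a < b ∧ b < c ∧ c < d ∧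
    Precedes w b d ∧ Precedes w d a ∧ Precedes w a c ∧
    ¬ ∃ e, e ∈ w ∧ d < e ∧ Precedes w a e ∧ Precedes w e c

/-- The number of descents of a word. -/
def des (w : List ℕ) : ℕ := ((w.zip w.tail).filter (fun p => p.2 < p.1)).length

/-- The finset of all words of permutations of `{1,…,n}`. -/
def permsOf (n : ℕ) : Finset (List ℕ) := (idPerm n).permutations.toFinset

/-- The finset of `t`-revstack sortable permutations of `{1,…,n}`. -/
def revstackSortable (n t : ℕ) : Finset (List ℕ) :=
  (permsOf n).filter (fun w => revstackSort^[t] w = idPerm n)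

/-- The finset of `t`-stack sortable permutations of `{1,…,n}`. -/
def stackSortable (n t : ℕ) : Finset (List ℕ) :=
  (permsOf n).filter (fun w => stackSort^[t] w = idPerm n)

/-- The descent polynomial `W(A;x) = ∑_{π ∈ A} x^{1+des(π)}` of a set of permutations. -/
noncomputable def descPoly (A : Finset (List ℕ)) : Polynomial ℚ :=
  ∑ w ∈ A, Polynomial.X ^ (1 + des w)

/-- The `m`-th Eulerian polynomial `A_m(x) = ∑_{π ∈ S_m} x^{1+des(π)}`, with `A_0(x) = 1`. -/
noncomputable def eulerianPoly (m : ℕ) : Polynomial ℚ :=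
  if m = 0 then 1 else descPoly (permsOf m)

/-- `v_t(n,i)`: the number of `t`-revstack sortable permutations of `{1,…,n}`
with exactly `i` descents. -/
def vNum (t n i : ℕ) : ℕ := ((revstackSortable n t).filter (fun w => des w = i)).card

/-- `w_t(n,i)`: the number of `t`-stack sortable permutations of `{1,…,n}`
with exactly `i` descents. -/
def wNum (t n i : ℕ) : ℕ := ((stackSortable n t).filter (fun w => des w = i)).card

theorem inversion_becomes_noninversion_under_revstack
    (n : ℕ) (π : List ℕ) (hπ : IsPermWord n π) (a b : ℕ)
    (ha : 1 ≤ a) (hab : a < b) (hb : b ≤ n)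
    (h : Precedes π b a) :
    Precedes (revstackSort π) a b := by
  have hndid : (idPerm n).Nodup := List.nodup_range'
  have hnd : π.Nodup := hπ.nodup_iff.mpr hndid
  have haw : a ∈ π := hπ.mem_iff.mpr (by
    rw [idPerm, List.mem_range']
    exact ⟨a - 1, by omega, by omega⟩)
  have hbw : b ∈ π := hπ.mem_iff.mpr (by
    rw [idPerm, List.mem_range']
    exact ⟨b - 1, by omega, by omega⟩)
  have h1 : π.idxOf b < π.idxOf a := h
  have hia := List.idxOf_lt_length_iff.mpr haw
  have hib := List.idxOf_lt_length_iff.mpr hbw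
  have hra := indexOf_reverse_eq hnd haw
  have hrb := indexOf_reverse_eq hnd hbw
  have hrev : π.reverse.idxOf a < π.reverse.idxOf b := by rw [hra, hrb]; omega
  have hres := stackSort_mono (List.nodup_reverse.mpr hnd) (List.mem_reverse.mpr haw)
    (List.mem_reverse.mpr hbw) hab hrev
  exact hres
end

section
/- Let π be a permutation of {1,…,n} and let a < b. The pair (b,a) is an inversion in T(π) (i.e. b precedes a in T(π)) if and only if there exists a value c > b such that the values a, c, b occur in this order in π (i.e. (a,c,b) is an occurrence of the pattern 132 in π). -/
private theorem max?_spec {w : List ℕ} (hw : w ≠ []) :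
    w.max?.getD 0 ∈ w ∧ ∀ x ∈ w, x ≤ w.max?.getD 0 := by
  cases h : w.max? with
  | none => rw [List.max?_eq_none_iff] at h; exact absurd h hw
  | some b =>
    rw [List.max?_eq_some_iff] at h
    simpa using h

private theorem mDecomp {w : List ℕ} {m : ℕ} (hm : m ∈ w) :
    w = w.takeWhile (· ≠ m) ++ m :: (w.dropWhile (· ≠ m)).tail ∧ m ∉ w.takeWhile (· ≠ m) := by
  have hmt : m ∉ w.takeWhile (· ≠ m) := fun h => by simpa using List.mem_takeWhile_imp h
  have hmd : m ∈ w.dropWhile (· ≠ m) := by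
    have h2 := List.takeWhile_append_dropWhile (p := (· ≠ m)) (l := w)
    rw [← h2] at hm
    exact (List.mem_append.mp hm).resolve_left hmt
  have hne : w.dropWhile (· ≠ m) ≠ [] := List.ne_nil_of_mem hmd
  have hhead : (w.dropWhile (· ≠ m)).head hne = m := by
    have := List.head_dropWhile_not (· ≠ m) hne
    simpa using this
  refine ⟨?_, hmt⟩
  conv_lhs => rw [← List.takeWhile_append_dropWhile (p := (· ≠ m)) (l := w),
    ← List.cons_head_tail hne, hhead]

private theorem precedes_append_left {u v : List ℕ} {x y : ℕ} (hx : x ∈ u) (hy : y ∉ u) :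
    Precedes (u ++ v) x y := by
  unfold Precedes
  rw [List.idxOf_append_of_mem hx, List.idxOf_append_of_notMem hy]
  exact lt_of_lt_of_le (List.idxOf_lt_length_iff.mpr hx) (Nat.le_add_right _ _)

private theorem precedes_append_iff_left {u v : List ℕ} {x y : ℕ} (hx : x ∈ u) (hy : y ∈ u) :
    Precedes (u ++ v) x y ↔ Precedes u x y := by
  unfold Precedes
  rw [List.idxOf_append_of_mem hx, List.idxOf_append_of_mem hy]

private theorem precedes_append_iff_right {u v : List ℕ} {x y : ℕ} (hx : x ∉ u) (hy : y ∉ u) :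
    Precedes (u ++ v) x y ↔ Precedes v x y := by
  unfold Precedes
  rw [List.idxOf_append_of_notMem hx, List.idxOf_append_of_notMem hy]
  omega

private theorem mem_left_of_precedes {u v : List ℕ} {y z : ℕ} (hy : y ∈ u)
    (h : Precedes (u ++ v) z y) : z ∈ u := by
  by_contra hzu
  unfold Precedes at h
  rw [List.idxOf_append_of_notMem hzu, List.idxOf_append_of_mem hy] at h
  have := List.idxOf_lt_length_iff.mpr hy
  omega

private theorem indexOf_reverse {l : List ℕ} (hnd : l.Nodup) {x : ℕ} (hx : x ∈ l) :
    l.reverse.idxOf x = l.length - 1 - l.idxOf x := by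
  induction l with
  | nil => cases hx
  | cons a as ih =>
    rw [List.reverse_cons]
    rcases List.mem_cons.mp hx with h | h
    · subst h
      have hxa : x ∉ as := (List.nodup_cons.mp hnd).1
      have : x ∉ as.reverse := by simpa using hxa
      rw [List.idxOf_append_of_notMem this]
      simp [List.idxOf_cons]
    · have hax : a ≠ x := fun he => (List.nodup_cons.mp hnd).1 (he ▸ h)
      have hxr : x ∈ as.reverse := by simpa using h
      rw [List.idxOf_append_of_mem hxr, ih (List.nodup_cons.mp hnd).2 h]
      have h1 : as.idxOf x < as.length := List.idxOf_lt_length_iff.mpr h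
      have hbeq : (a == x) = false := by simpa using hax
      rw [List.idxOf_cons, hbeq]
      simp only [cond_false, List.length_cons]
      omega

private theorem precedes_reverse {w : List ℕ} (hnd : w.Nodup) {x y : ℕ} (hx : x ∈ w)
    (hy : y ∈ w) : Precedes w.reverse x y ↔ Precedes w y x := by
  unfold Precedes
  rw [indexOf_reverse hnd hx, indexOf_reverse hnd hy]
  have h1 := List.idxOf_lt_length_iff.mpr hx
  have h2 := List.idxOf_lt_length_iff.mpr hy
  omega

private theorem stackSort_eq (w : List ℕ) (hw : w ≠ []) :
    stackSort w = stackSort (w.takeWhile (· ≠ w.max?.getD 0)) ++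
      stackSort ((w.dropWhile (· ≠ w.max?.getD 0)).tail) ++ [w.max?.getD 0] := by
  cases w with
  | nil => simp at hw
  | cons a as => rw [stackSort]

private theorem stack_inv : ∀ (N : ℕ) (w : List ℕ), w.length ≤ N → w.Nodup →
    ∀ a b : ℕ, a ∈ w → b ∈ w → a < b →
    (Precedes (stackSort w) b a ↔
      ∃ c, c ∈ w ∧ b < c ∧ Precedes w b c ∧ Precedes w c a) := by
  intro N
  induction N with
  | zero =>
    intro w hlen _ a b haw _ _
    rw [List.length_eq_zero_iff.mp (Nat.le_zero.mp hlen)] at haw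
    cases haw
  | succ N ih =>
    intro w hlen hnd a b haw hbw hab
    have hw : w ≠ [] := List.ne_nil_of_mem haw
    obtain ⟨hmw, hmax⟩ := max?_spec hw
    obtain ⟨hdec, hmL⟩ := mDecomp hmw
    have hssw := stackSort_eq w hw
    have hlenL := length_takeWhile_ne_lt hmw
    have hlenR := length_tail_dropWhile_lt hw (· ≠ w.max?.getD 0)
    set m := w.max?.getD 0 with hmdef
    set L := w.takeWhile (· ≠ m) with hLdef
    set R := (w.dropWhile (· ≠ m)).tail with hRdef
    have hndLR : (L ++ m :: R).Nodup := hdec ▸ hnd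
    rw [List.nodup_append] at hndLR
    obtain ⟨hndL, hndmR, hdisj⟩ := hndLR
    have hmR : m ∉ R := (List.nodup_cons.mp hndmR).1
    have hndR : R.Nodup := (List.nodup_cons.mp hndmR).2
    have hRL : ∀ x ∈ R, x ∉ L := fun x hx hxL => hdisj x hxL x (List.mem_cons_of_mem _ hx) rfl
    have hSL := stackSort_perm L
    have hSR := stackSort_perm R
    have ham : a ≠ m := fun h => absurd (hmax b hbw) (by omega)
    have haLR : a ∈ L ∨ a ∈ R := by
      have h := hdec ▸ haw
      rcases List.mem_append.mp h with h | h
      · exact Or.inl h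
      · rcases List.mem_cons.mp h with h | h
        · exact absurd h ham
        · exact Or.inr h
    have hassoc : L ++ m :: R = (L ++ [m]) ++ R := by simp
    have notmemLm : ∀ x ∈ R, x ∉ L ++ [m] := by
      intro x hx h
      rcases List.mem_append.mp h with h | h
      · exact hRL x hx h
      · simp only [List.mem_singleton] at h; subst h; exact hmR hx
    have precR : ∀ x y, x ∈ R → y ∈ R → (Precedes w x y ↔ Precedes R x y) := by
      intro x y hx hy
      conv_lhs => rw [hdec, hassoc]
      exact precedes_append_iff_right (notmemLm x hx) (notmemLm y hy)
    have precL : ∀ x y, x ∈ L → y ∈ L → (Precedes w x y ↔ Precedes L x y) := by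
      intro x y hx hy
      conv_lhs => rw [hdec]
      exact precedes_append_iff_left hx hy
    have precCm : ∀ x ∈ L, Precedes w x m := by
      intro x hx; rw [hdec]; exact precedes_append_left hx hmL
    have precmR : ∀ y ∈ R, Precedes w m y := by
      intro y hy; rw [hdec, hassoc]
      exact precedes_append_left (by simp) (notmemLm y hy)
    rw [hssw, List.append_assoc]
    by_cases hbm : b = m
    · subst hbm
      constructor
      · intro h
        rw [← List.append_assoc] at h
        have hamem : a ∈ stackSort L ++ stackSort R := by
          rcases haLR with h' | h'
          · exact List.mem_append_left _ (hSL.mem_iff.mpr h')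
          · exact List.mem_append_right _ (hSR.mem_iff.mpr h')
        have := mem_left_of_precedes hamem h
        rcases List.mem_append.mp this with h' | h'
        · exact absurd (hSL.mem_iff.mp h') hmL
        · exact absurd (hSR.mem_iff.mp h') hmR
      · rintro ⟨c, hcw, hbc, -, -⟩
        exact absurd (hmax c hcw) (by omega)
    · have hbLR : b ∈ L ∨ b ∈ R := by
        have h := hdec ▸ hbw
        rcases List.mem_append.mp h with h | h
        · exact Or.inl h
        · rcases List.mem_cons.mp h with h | h
          · exact absurd h hbm
          · exact Or.inr h
      have hblm : b < m := lt_of_le_of_ne (hmax b hbw) hbm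
      rcases hbLR with hbL | hbR
      · rcases haLR with haL | haR
        · -- b ∈ L, a ∈ L
          rw [precedes_append_iff_left (hSL.mem_iff.mpr hbL) (hSL.mem_iff.mpr haL),
            ih L (by omega) hndL a b haL hbL hab]
          constructor
          · rintro ⟨c, hcL, hbc, h1, h2⟩
            exact ⟨c, by rw [hdec]; exact List.mem_append_left _ hcL, hbc,
              (precL b c hbL hcL).mpr h1, (precL c a hcL haL).mpr h2⟩
          · rintro ⟨c, hcw, hbc, h1, h2⟩
            have hcL : c ∈ L := by
              have h2' := h2; rw [hdec] at h2'
              exact mem_left_of_precedes haL h2'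
            exact ⟨c, hcL, hbc, (precL b c hbL hcL).mp h1, (precL c a hcL haL).mp h2⟩
        · -- b ∈ L, a ∈ R
          constructor
          · intro _
            exact ⟨m, hmw, hblm, precCm b hbL, precmR a haR⟩
          · intro _
            exact precedes_append_left (hSL.mem_iff.mpr hbL)
              (fun h => hRL a haR (hSL.mem_iff.mp h))
      · rcases haLR with haL | haR
        · -- b ∈ R, a ∈ L
          constructor
          · intro h
            have hbSL := mem_left_of_precedes (hSL.mem_iff.mpr haL) h
            exact absurd (hSL.mem_iff.mp hbSL) (hRL b hbR)
          · rintro ⟨c, hcw, hbc, h1, h2⟩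
            have h2' := h2; rw [hdec] at h2'
            have hcL : c ∈ L := mem_left_of_precedes haL h2'
            have h1' := h1; rw [hdec] at h1'
            have hbL : b ∈ L := mem_left_of_precedes hcL h1'
            exact absurd hbL (hRL b hbR)
        · -- b ∈ R, a ∈ R
          rw [precedes_append_iff_right (fun h => hRL b hbR (hSL.mem_iff.mp h))
              (fun h => hRL a haR (hSL.mem_iff.mp h)),
            precedes_append_iff_left (hSR.mem_iff.mpr hbR) (hSR.mem_iff.mpr haR),
            ih R (by omega) hndR a b haR hbR hab]
          constructor
          · rintro ⟨c, hcR, hbc, h1, h2⟩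
            exact ⟨c, by rw [hdec]; exact List.mem_append_right _ (List.mem_cons_of_mem _ hcR),
              hbc, (precR b c hbR hcR).mpr h1, (precR c a hcR haR).mpr h2⟩
          · rintro ⟨c, hcw, hbc, h1, h2⟩
            have hcR : c ∈ R := by
              by_contra hcnR
              have h1' := h1; rw [hdec, hassoc] at h1'
              have hcw' := hcw; rw [hdec, hassoc] at hcw'
              rcases List.mem_append.mp hcw' with h' | h'
              · exact notmemLm b hbR (mem_left_of_precedes h' h1')
              · exact hcnR h'
            exact ⟨c, hcR, hbc, (precR b c hbR hcR).mp h1, (precR c a hcR haR).mp h2⟩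

theorem inversion_in_revstack_iff_132
    (n : ℕ) (π : List ℕ) (hπ : IsPermWord n π) (a b : ℕ)
    (ha : 1 ≤ a) (hab : a < b) (hb : b ≤ n) :
    Precedes (revstackSort π) b a ↔
      ∃ c, c ∈ π ∧ b < c ∧ Precedes π a c ∧ Precedes π c b := by
  have hndid : (idPerm n).Nodup := by unfold idPerm; exact List.nodup_range'
  have hnd : π.Nodup := hπ.nodup_iff.mpr hndid
  have haπ : a ∈ π := by
    rw [hπ.mem_iff]; unfold idPerm; rw [List.mem_range'_1]; omega
  have hbπ : b ∈ π := by
    rw [hπ.mem_iff]; unfold idPerm; rw [List.mem_range'_1]; omega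
  have hndr : π.reverse.Nodup := by simpa using hnd
  have har : a ∈ π.reverse := by simpa using haπ
  have hbr : b ∈ π.reverse := by simpa using hbπ
  have key := stack_inv π.reverse.length π.reverse le_rfl hndr a b har hbr hab
  rw [show revstackSort π = stackSort π.reverse from rfl, key]
  constructor
  · rintro ⟨c, hcr, hbc, h1, h2⟩
    have hcπ : c ∈ π := by simpa using hcr
    exact ⟨c, hcπ, hbc, (precedes_reverse hnd hcπ haπ).mp h2,
      (precedes_reverse hnd hbπ hcπ).mp h1⟩
  · rintro ⟨c, hcπ, hbc, h1, h2⟩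
    exact ⟨c, by simpa using hcπ, hbc, (precedes_reverse hnd hbπ hcπ).mpr h2,
      (precedes_reverse hnd hcπ haπ).mpr h1⟩
end

section
/- For every n ≥ 2, the polynomial D_n(x) = Σ_{π ∈ S_n, π^{-1}(n) > π^{-1}(n−1)} x^{1+des(π)} (the descent polynomial over permutations of length n in which n occurs to the right of n−1) satisfies D_n(x) = (1/2)·Σ_{i=0}^{n−1} C(n−1,i)·A_i(x)·A_{n−1−i}(x), where A_m(x) is the m-th Eulerian polynomial. -/
theorem des_nil : des [] = 0 := rfl
theorem des_single (a : ℕ) : des [a] = 0 := rfl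

theorem des_cons_cons (a b : ℕ) (t : List ℕ) :
    des (a :: b :: t) = (if b < a then 1 else 0) + des (b :: t) := by
  simp only [des, List.tail_cons, List.zip_cons_cons, List.filter_cons]
  by_cases h : b < a <;> simp [h, Nat.add_comm]

/-- `ee u = if u = [] then 0 else 1 + des u`. -/
def ee (u : List ℕ) : ℕ := if u = [] then 0 else 1 + des u

theorem des_map (f : ℕ → ℕ) :
    ∀ (w : List ℕ), (∀ a ∈ w, ∀ b ∈ w, (f b < f a ↔ b < a)) → des (w.map f) = des w := by
  intro w
  induction w with
  | nil => intro _; rfl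
  | cons a t ih =>
    intro hf
    cases t with
    | nil => rfl
    | cons b t' =>
      have h1 : f b < f a ↔ b < a := hf a (by simp) b (by simp)
      have h2 := ih (fun x hx y hy => hf x (by simp [hx]) y (by simp [hy]))
      simp only [List.map_cons] at h2 ⊢
      rw [des_cons_cons, des_cons_cons, h2]
      by_cases h : b < a
      · simp [h, h1.mpr h]
      · simp only [h, if_false]
        rw [if_neg (fun hc => h (h1.mp hc))]

theorem des_cons_big {n : ℕ} {τ : List ℕ} (h : ∀ x ∈ τ, x < n) : des (n :: τ) = ee τ := by
  cases τ with
  | nil => rfl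
  | cons b t =>
    rw [des_cons_cons, if_pos (h b (by simp)), ee, if_neg (by simp)]

theorem des_append_cons {n : ℕ} (τ : List ℕ) :
    ∀ (σ : List ℕ), σ ≠ [] → (∀ x ∈ σ, x < n) →
      des (σ ++ n :: τ) = des σ + des (n :: τ) := by
  intro σ
  induction σ with
  | nil => intro h; exact absurd rfl h
  | cons a t ih =>
    intro _ hlt
    cases t with
    | nil =>
      simp only [List.nil_append, List.cons_append, des_single, Nat.zero_add]
      rw [des_cons_cons, if_neg (by exact Nat.not_lt.mpr (le_of_lt (hlt a (by simp)))), Nat.zero_add]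
    | cons b t' =>
      have := ih (by simp) (fun x hx => hlt x (by simp [List.mem_cons] at hx ⊢; tauto))
      simp only [List.cons_append] at this ⊢
      rw [des_cons_cons, this, des_cons_cons, Nat.add_assoc]

/-- the key weight computation -/
theorem one_add_des_glue {n : ℕ} {σ τ : List ℕ} (hσ : σ ≠ [])
    (hσlt : ∀ x ∈ σ, x < n) (hτlt : ∀ x ∈ τ, x < n) :
    1 + des (σ ++ n :: τ) = ee σ + ee τ := by
  rw [des_append_cons τ σ hσ hσlt, des_cons_big hτlt]
  rw [show ee σ = 1 + des σ from if_neg hσ, Nat.add_assoc]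

def rnk (l : List ℕ) (x : ℕ) : ℕ := (l.filter (· ≤ x)).length
def unrnk (l : List ℕ) (m : ℕ) : ℕ := l.getD (m - 1) 0

theorem map_rnk_sorted : ∀ {u : List ℕ}, u.Pairwise (· < ·) →
    u.map (rnk u) = List.range' 1 u.length := by
  intro u
  induction u with
  | nil => intro _; rfl
  | cons a t ih =>
    intro hu
    have ha : ∀ b ∈ t, a < b := fun b hb => (List.pairwise_cons.mp hu).1 b hb
    have ht : t.Pairwise (· < ·) := (List.pairwise_cons.mp hu).2
    have h1 : rnk (a :: t) a = 1 := by
      simp only [rnk, List.filter_cons, decide_eq_true_eq, le_refl, if_pos]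
      rw [List.filter_eq_nil_iff.mpr (fun y hy => by
        simpa using Nat.not_le.mpr (ha y hy))]
      rfl
    have h2 : ∀ x ∈ t, rnk (a :: t) x = 1 + rnk t x := by
      intro x hx
      simp only [rnk, List.filter_cons, decide_eq_true_eq,
        if_pos (le_of_lt (ha x hx))]
      simp [Nat.add_comm]
    rw [List.map_cons, h1, List.length_cons, List.range'_succ]
    congr 1
    rw [List.map_congr_left h2]
    have : t.map (fun x => 1 + rnk t x) = (t.map (rnk t)).map (fun m => 1 + m) := by
      simp [List.map_map, Function.comp]
    rw [this, ih ht, List.map_add_range']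

theorem rnk_getElem {u : List ℕ} (hu : u.Pairwise (· < ·)) {i : ℕ} (hi : i < u.length) :
    rnk u u[i] = i + 1 := by
  have h := map_rnk_sorted hu
  calc rnk u u[i] = (u.map (rnk u))[i]'(by simpa using hi) := (List.getElem_map _).symm
    _ = (List.range' 1 u.length)[i]'(by simpa using hi) := List.getElem_of_eq h _
    _ = i + 1 := by simpa [Nat.add_comm] using List.getElem_range' i (by simpa using hi)

theorem unrnk_rnk {u : List ℕ} (hu : u.Pairwise (· < ·)) {x : ℕ} (hx : x ∈ u) :
    unrnk u (rnk u x) = x := by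
  obtain ⟨i, hi, rfl⟩ := List.getElem_of_mem hx
  rw [rnk_getElem hu hi, unrnk, Nat.add_sub_cancel, List.getD_eq_getElem _ _ hi]

theorem rnk_unrnk {u : List ℕ} (hu : u.Pairwise (· < ·)) {m : ℕ}
    (hm : m ∈ List.range' 1 u.length) : rnk u (unrnk u m) = m := by
  obtain ⟨i, hi, rfl⟩ := List.mem_range'.mp hm
  have : unrnk u (1 + 1 * i) = u[i] := by
    rw [unrnk, Nat.one_mul, Nat.add_comm, Nat.add_sub_cancel, List.getD_eq_getElem _ _ hi]
  rw [this, rnk_getElem hu hi, Nat.one_mul, Nat.add_comm]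

theorem rnk_lt_iff {u : List ℕ} (hu : u.Pairwise (· < ·)) {x y : ℕ}
    (hx : x ∈ u) (hy : y ∈ u) : rnk u y < rnk u x ↔ y < x := by
  obtain ⟨i, hi, rfl⟩ := List.getElem_of_mem hx
  obtain ⟨j, hj, rfl⟩ := List.getElem_of_mem hy
  rw [rnk_getElem hu hi, rnk_getElem hu hj]
  have hs := hu.sortedLT.strictMono_get
  have : u[j] < u[i] ↔ j < i := by
    have := hs.lt_iff_lt (a := ⟨j, hj⟩) (b := ⟨i, hi⟩)
    simpa [List.get_eq_getElem, Fin.lt_def] using this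
  rw [this]
  omega

theorem map_unrnk_range' (u : List ℕ) :
    (List.range' 1 u.length).map (unrnk u) = u := by
  have h0 : ∀ (v : List ℕ), (List.range v.length).map (fun i => v.getD i 0) = v := by
    intro v
    induction v with
    | nil => rfl
    | cons a t ih =>
      rw [List.length_cons, List.range_succ_eq_map, List.map_cons, List.map_map]
      simp only [List.getD_cons_zero]
      conv_lhs => rw [show ((fun i => (a :: t).getD i 0) ∘ Nat.succ) = fun i => t.getD i 0 from funext fun i => rfl]
      rw [ih]
  rw [List.range'_eq_map_range, List.map_map]
  have : (unrnk u ∘ fun x => 1 + x) = fun i => u.getD i 0 := by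
    funext i; simp [unrnk, Function.comp, Nat.add_comm]
  rw [this, h0]

theorem mem_permsOf {n : ℕ} {w : List ℕ} : w ∈ permsOf n ↔ w.Perm (idPerm n) := by
  rw [permsOf, List.mem_toFinset, List.mem_permutations]

theorem sum_perm_pow_sorted {u : List ℕ} (hu : u.Pairwise (· < ·)) :
    ∑ w ∈ u.permutations.toFinset, (Polynomial.X : Polynomial ℚ) ^ ee w
      = eulerianPoly u.length := by
  rcases eq_or_ne u [] with rfl | hne
  · simp [eulerianPoly, ee]
  · have hlen : u.length ≠ 0 := by simpa using hne
    rw [eulerianPoly, if_neg hlen, descPoly]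
    refine Finset.sum_nbij' (fun w => w.map (rnk u)) (fun v => v.map (unrnk u))
      ?_ ?_ ?_ ?_ ?_
    · intro w hw
      have hw : w.Perm u := List.mem_permutations.mp (List.mem_toFinset.mp hw)
      refine mem_permsOf.mpr ((hw.map _).trans ?_)
      rw [map_rnk_sorted hu]; exact List.Perm.refl _
    · intro v hv
      have hv : v.Perm (idPerm u.length) := mem_permsOf.mp hv
      refine List.mem_toFinset.mpr (List.mem_permutations.mpr ((hv.map _).trans ?_))
      rw [idPerm, map_unrnk_range' u]
    · intro w hw
      have hw : w.Perm u := List.mem_permutations.mp (List.mem_toFinset.mp hw)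
      show List.map (unrnk u) (List.map (rnk u) w) = w
      rw [List.map_map]
      refine (List.map_congr_left fun x hx => ?_).trans (List.map_id w)
      exact unrnk_rnk hu (hw.mem_iff.mp hx)
    · intro v hv
      have hv : v.Perm (idPerm u.length) := mem_permsOf.mp hv
      show List.map (rnk u) (List.map (unrnk u) v) = v
      rw [List.map_map]
      refine (List.map_congr_left fun m hm => ?_).trans (List.map_id v)
      exact rnk_unrnk hu (hv.mem_iff.mp hm)
    · intro w hw
      have hw : w.Perm u := List.mem_permutations.mp (List.mem_toFinset.mp hw)
      have hwne : w ≠ [] := by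
        intro h; subst h; exact hne hw.nil_eq.symm
      rw [ee, if_neg hwne, des_map (rnk u) w
        (fun a ha b hb => rnk_lt_iff hu (hw.mem_iff.mp ha) (hw.mem_iff.mp hb))]

theorem sum_perm_pow {l : List ℕ} (hl : l.Nodup) :
    ∑ w ∈ l.permutations.toFinset, (Polynomial.X : Polynomial ℚ) ^ ee w
      = eulerianPoly l.length := by
  have hp : (l.mergeSort (· ≤ ·)).Perm l := l.mergeSort_perm _
  have hnd : (l.mergeSort (· ≤ ·)).Nodup := hp.nodup_iff.mpr hl
  have hs : (l.mergeSort (· ≤ ·)).Pairwise (· < ·) :=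
    ((List.pairwise_mergeSort' (· ≤ ·) l).sortedLE.sortedLT_of_nodup hnd).pairwise
  have h1 : l.permutations.toFinset = (l.mergeSort (· ≤ ·)).permutations.toFinset :=
    List.toFinset_eq_of_perm _ _ hp.symm.permutations
  rw [h1, sum_perm_pow_sorted hs, hp.length_eq]

theorem perm_of_nodup_toFinset_eq {l l' : List ℕ} (h : l.Nodup) (h' : l'.Nodup)
    (he : l.toFinset = l'.toFinset) : l.Perm l' := by
  have h1 : l.dedup.Perm l'.dedup := by
    have := congrArg Finset.val he
    simp only [List.toFinset, Multiset.toFinset_val, Multiset.coe_dedup] at this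
    exact Quotient.exact this
  rwa [List.dedup_eq_self.mpr h, List.dedup_eq_self.mpr h'] at h1

theorem idPerm_nodup (n : ℕ) : (idPerm n).Nodup := List.nodup_range'

theorem mem_idPerm {n x : ℕ} : x ∈ idPerm n ↔ 1 ≤ x ∧ x ≤ n := by
  simp only [idPerm, List.mem_range']
  constructor
  · rintro ⟨i, hi, rfl⟩; omega
  · intro ⟨h1, h2⟩; exact ⟨x - 1, by omega, by omega⟩

theorem idPerm_toFinset (n : ℕ) : (idPerm n).toFinset = Finset.Icc 1 n := by
  ext x; rw [List.mem_toFinset, mem_idPerm, Finset.mem_Icc]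

theorem dropWhile_ne_self {n : ℕ} : ∀ {w : List ℕ}, n ∈ w →
    w.dropWhile (· ≠ n) = n :: (w.dropWhile (· ≠ n)).tail := by
  intro w
  induction w with
  | nil => intro h; cases h
  | cons a t ih =>
    intro h
    by_cases ha : a = n
    · subst ha; simp [List.dropWhile_cons]
    · rw [List.dropWhile_cons_of_pos (by simpa using ha)]
      exact ih ((List.mem_cons.mp h).resolve_left fun he => ha he.symm)

theorem split_at_mem {n : ℕ} {w : List ℕ} (h : n ∈ w) :
    w.takeWhile (· ≠ n) ++ n :: (w.dropWhile (· ≠ n)).tail = w := by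
  conv_rhs => rw [← List.takeWhile_append_dropWhile (p := (· ≠ n)) (l := w)]
  rw [← dropWhile_ne_self h]

theorem takeWhile_glue {n : ℕ} {τ : List ℕ} :
    ∀ {σ : List ℕ}, (∀ x ∈ σ, x ≠ n) → (σ ++ n :: τ).takeWhile (· ≠ n) = σ := by
  intro σ
  induction σ with
  | nil => intro _; simp [List.takeWhile_cons]
  | cons a t ih =>
    intro h
    rw [List.cons_append, List.takeWhile_cons_of_pos (by simpa using h a (by simp)),
      ih (fun x hx => h x (by simp [hx]))]

theorem dropWhile_glue {n : ℕ} {τ : List ℕ} :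
    ∀ {σ : List ℕ}, (∀ x ∈ σ, x ≠ n) → (σ ++ n :: τ).dropWhile (· ≠ n) = n :: τ := by
  intro σ
  induction σ with
  | nil => intro _; simp [List.dropWhile_cons]
  | cons a t ih =>
    intro h
    rw [List.cons_append, List.dropWhile_cons_of_pos (by simpa using h a (by simp)),
      ih (fun x hx => h x (by simp [hx]))]

theorem indexOf_lt_iff {n : ℕ} (hn : 1 ≤ n) :
    ∀ {w : List ℕ}, n ∈ w →
      (w.idxOf (n - 1) < w.idxOf n ↔ n - 1 ∈ w.takeWhile (· ≠ n)) := by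
  intro w
  induction w with
  | nil => intro h; cases h
  | cons a t ih =>
    intro h
    by_cases ha : a = n
    · subst ha
      rw [List.idxOf_cons_self, List.takeWhile_cons_of_neg (by simp)]
      simp
    · have ht : n ∈ t := (List.mem_cons.mp h).resolve_left fun he => ha he.symm
      have e1 : List.idxOf n (a :: t) = (List.idxOf n t).succ :=
        List.idxOf_cons_ne _ ha
      rw [List.takeWhile_cons_of_pos (by simpa using ha), e1]
      by_cases ha' : a = n - 1
      · subst ha'
        rw [List.idxOf_cons_self]
        simp [Nat.succ_pos]
      · have e2 : List.idxOf (n - 1) (a :: t) = (List.idxOf (n - 1) t).succ :=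
          List.idxOf_cons_ne _ ha'
        rw [e2, List.mem_cons]
        constructor
        · intro hlt
          exact Or.inr ((ih ht).mp (by omega))
        · intro hm
          rcases hm with hm | hm
          · exact absurd hm.symm ha'
          · have := (ih ht).mpr hm; omega

theorem forward_facts {n : ℕ} (hn : 2 ≤ n) {w : List ℕ} (hw : w.Perm (idPerm n)) :
    w.takeWhile (· ≠ n) ++ n :: (w.dropWhile (· ≠ n)).tail = w ∧
    (w.takeWhile (· ≠ n)).toFinset ⊆ Finset.Icc 1 (n - 1) ∧
    (w.takeWhile (· ≠ n)).Nodup ∧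
    ((w.dropWhile (· ≠ n)).tail).Nodup ∧
    ((w.dropWhile (· ≠ n)).tail).toFinset
      = Finset.Icc 1 (n - 1) \ (w.takeWhile (· ≠ n)).toFinset := by
  have hnw : n ∈ w := hw.mem_iff.mpr (mem_idPerm.mpr ⟨by omega, le_rfl⟩)
  have hsplit := split_at_mem hnw
  have hmemw : ∀ x, x ∈ w ↔ 1 ≤ x ∧ x ≤ n := fun x => hw.mem_iff.trans mem_idPerm
  have hnd : (w.takeWhile (· ≠ n) ++ n :: (w.dropWhile (· ≠ n)).tail).Nodup := by
    rw [hsplit]; exact hw.nodup_iff.mpr (idPerm_nodup n)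
  obtain ⟨hLnd, hnRnd, hdisj⟩ := List.nodup_append.mp hnd
  obtain ⟨hnR, hRnd⟩ := List.nodup_cons.mp hnRnd
  have hLmem : ∀ x ∈ w.takeWhile (· ≠ n), x ∈ Finset.Icc 1 (n - 1) := by
    intro x hx
    have hxn : x ≠ n := by simpa using List.mem_takeWhile_imp hx
    have hxw : x ∈ w := by
      rw [← hsplit]; exact List.mem_append.mpr (Or.inl hx)
    have := (hmemw x).mp hxw
    rw [Finset.mem_Icc]; omega
  refine ⟨hsplit, fun x hx => hLmem x (List.mem_toFinset.mp hx), hLnd, hRnd, ?_⟩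
  ext x
  rw [List.mem_toFinset, Finset.mem_sdiff, Finset.mem_Icc, List.mem_toFinset]
  constructor
  · intro hx
    have hxw : x ∈ w := by
      rw [← hsplit]; exact List.mem_append.mpr (Or.inr (List.mem_cons.mpr (Or.inr hx)))
    have hb := (hmemw x).mp hxw
    have hxn : x ≠ n := fun he => hnR (he ▸ hx)
    have hxL : x ∉ w.takeWhile (· ≠ n) := fun hL => hdisj x hL x (List.mem_cons.mpr (Or.inr hx)) rfl
    exact ⟨⟨by omega, by omega⟩, hxL⟩
  · rintro ⟨⟨h1, h2⟩, hxL⟩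
    have hxw : x ∈ w := (hmemw x).mpr ⟨h1, by omega⟩
    rw [← hsplit] at hxw
    rcases List.mem_append.mp hxw with h | h
    · exact absurd h hxL
    · rcases List.mem_cons.mp h with h | h
      · omega
      · exact h

theorem backward_facts {n : ℕ} (hn : 2 ≤ n) {S : Finset ℕ} {σ τ : List ℕ}
    (hS : S ⊆ Finset.Icc 1 (n - 1))
    (hσ : σ.Perm (Finset.sort S (· ≤ ·)))
    (hτ : τ.Perm (Finset.sort (Finset.Icc 1 (n - 1) \ S) (· ≤ ·))) :
    (∀ x ∈ σ, x ≠ n) ∧ (σ ++ n :: τ).Perm (idPerm n) ∧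
    (σ ++ n :: τ).takeWhile (· ≠ n) = σ ∧
    ((σ ++ n :: τ).dropWhile (· ≠ n)).tail = τ := by
  have hσS : ∀ x, x ∈ σ ↔ x ∈ S := fun x => hσ.mem_iff.trans (Finset.mem_sort _)
  have hτS : ∀ x, x ∈ τ ↔ x ∈ Finset.Icc 1 (n - 1) \ S :=
    fun x => hτ.mem_iff.trans (Finset.mem_sort _)
  have hnσ : ∀ x ∈ σ, x ≠ n := by
    intro x hx
    have := Finset.mem_Icc.mp (hS ((hσS x).mp hx)); omega
  have hnτ : n ∉ τ := by
    intro hx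
    have := Finset.mem_Icc.mp (Finset.mem_sdiff.mp ((hτS n).mp hx)).1; omega
  have hσnd : σ.Nodup := hσ.nodup_iff.mpr (Finset.sort_nodup _ _)
  have hτnd : τ.Nodup := hτ.nodup_iff.mpr (Finset.sort_nodup _ _)
  have hglue : (σ ++ n :: τ).Nodup := by
    rw [List.nodup_append]
    refine ⟨hσnd, List.nodup_cons.mpr ⟨hnτ, hτnd⟩, ?_⟩
    intro x hx y hx' hxy
    subst hxy
    rcases List.mem_cons.mp hx' with h | h
    · exact hnσ x hx h
    · exact (Finset.mem_sdiff.mp ((hτS x).mp h)).2 ((hσS x).mp hx)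
  have hperm : (σ ++ n :: τ).Perm (idPerm n) := by
    refine perm_of_nodup_toFinset_eq hglue (idPerm_nodup n) ?_
    rw [idPerm_toFinset]
    ext x
    rw [List.mem_toFinset, List.mem_append, List.mem_cons, Finset.mem_Icc]
    constructor
    · rintro (h | h | h)
      · have := Finset.mem_Icc.mp (hS ((hσS x).mp h)); omega
      · omega
      · have := Finset.mem_Icc.mp (Finset.mem_sdiff.mp ((hτS x).mp h)).1; omega
    · rintro ⟨h1, h2⟩
      by_cases hxS : x ∈ S
      · exact Or.inl ((hσS x).mpr hxS)
      · by_cases hxn : x = n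
        · exact Or.inr (Or.inl hxn)
        · exact Or.inr (Or.inr ((hτS x).mpr
            (Finset.mem_sdiff.mpr ⟨Finset.mem_Icc.mpr ⟨h1, by omega⟩, hxS⟩)))
  exact ⟨hnσ, hperm, takeWhile_glue hnσ, by rw [dropWhile_glue hnσ, List.tail_cons]⟩

theorem descPoly_filter_eq (n : ℕ) (hn : 2 ≤ n) :
    descPoly ((permsOf n).filter (fun w => w.idxOf (n - 1) < w.idxOf n)) =
      ∑ p ∈ (((Finset.Icc 1 (n - 1)).powerset.filter (fun S => n - 1 ∈ S)).sigma
          (fun S => (Finset.sort S (· ≤ ·)).permutations.toFinset ×ˢ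
                    (Finset.sort (Finset.Icc 1 (n - 1) \ S) (· ≤ ·)).permutations.toFinset)),
        (Polynomial.X : Polynomial ℚ) ^ (ee p.2.1 + ee p.2.2) := by
  rw [descPoly]
  refine Finset.sum_nbij'
    (fun w => ⟨(w.takeWhile (· ≠ n)).toFinset,
      (w.takeWhile (· ≠ n), (w.dropWhile (· ≠ n)).tail)⟩)
    (fun p => p.2.1 ++ n :: p.2.2) ?_ ?_ ?_ ?_ ?_
  · intro w hw'
    obtain ⟨hwp, hcond⟩ := Finset.mem_filter.mp hw'
    have hw := mem_permsOf.mp hwp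
    obtain ⟨hsplit, hLsub, hLnd, hRnd, hRfin⟩ := forward_facts hn hw
    have hnw : n ∈ w := hw.mem_iff.mpr (mem_idPerm.mpr ⟨by omega, le_rfl⟩)
    refine Finset.mem_sigma.mpr ⟨Finset.mem_filter.mpr ⟨Finset.mem_powerset.mpr hLsub, ?_⟩, ?_⟩
    · exact List.mem_toFinset.mpr ((indexOf_lt_iff (by omega) hnw).mp hcond)
    · refine Finset.mem_product.mpr ⟨?_, ?_⟩
      · refine List.mem_toFinset.mpr (List.mem_permutations.mpr ?_)
        exact perm_of_nodup_toFinset_eq hLnd (Finset.sort_nodup _ (· ≤ ·))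
          (by rw [Finset.sort_toFinset])
      · refine List.mem_toFinset.mpr (List.mem_permutations.mpr ?_)
        exact perm_of_nodup_toFinset_eq hRnd (Finset.sort_nodup _ (· ≤ ·))
          (by rw [Finset.sort_toFinset, hRfin])
  · rintro ⟨S, σ, τ⟩ hp
    obtain ⟨hS', hprod⟩ := Finset.mem_sigma.mp hp
    obtain ⟨hSsub', hSmem⟩ := Finset.mem_filter.mp hS'
    have hSsub := Finset.mem_powerset.mp hSsub'
    obtain ⟨hσ', hτ'⟩ := Finset.mem_product.mp hprod
    have hσ := List.mem_permutations.mp (List.mem_toFinset.mp hσ')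
    have hτ := List.mem_permutations.mp (List.mem_toFinset.mp hτ')
    obtain ⟨hnσ, hperm, htake, hdrop⟩ := backward_facts hn hSsub hσ hτ
    refine Finset.mem_filter.mpr ⟨mem_permsOf.mpr hperm, ?_⟩
    have hnglue : n ∈ σ ++ n :: τ := List.mem_append.mpr (Or.inr (List.mem_cons_self))
    refine (indexOf_lt_iff (by omega) hnglue).mpr ?_
    rw [htake]
    exact (hσ.mem_iff).mpr ((Finset.mem_sort _).mpr hSmem)
  · intro w hw'
    obtain ⟨hwp, _⟩ := Finset.mem_filter.mp hw'
    have hw := mem_permsOf.mp hwp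
    have hnw : n ∈ w := hw.mem_iff.mpr (mem_idPerm.mpr ⟨by omega, le_rfl⟩)
    exact split_at_mem hnw
  · rintro ⟨S, σ, τ⟩ hp
    obtain ⟨hS', hprod⟩ := Finset.mem_sigma.mp hp
    obtain ⟨hSsub', hSmem⟩ := Finset.mem_filter.mp hS'
    have hSsub := Finset.mem_powerset.mp hSsub'
    obtain ⟨hσ', hτ'⟩ := Finset.mem_product.mp hprod
    have hσ := List.mem_permutations.mp (List.mem_toFinset.mp hσ')
    have hτ := List.mem_permutations.mp (List.mem_toFinset.mp hτ')
    obtain ⟨hnσ, hperm, htake, hdrop⟩ := backward_facts hn hSsub hσ hτ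
    have hfin : σ.toFinset = S := by
      rw [List.toFinset_eq_of_perm _ _ hσ, Finset.sort_toFinset]
    simp only [htake, hdrop, hfin]
  · intro w hw'
    obtain ⟨hwp, hcond⟩ := Finset.mem_filter.mp hw'
    have hw := mem_permsOf.mp hwp
    obtain ⟨hsplit, hLsub, hLnd, hRnd, hRfin⟩ := forward_facts hn hw
    have hnw : n ∈ w := hw.mem_iff.mpr (mem_idPerm.mpr ⟨by omega, le_rfl⟩)
    have hLne : w.takeWhile (· ≠ n) ≠ [] :=
      List.ne_nil_of_mem ((indexOf_lt_iff (by omega) hnw).mp hcond)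
    have hLlt : ∀ x ∈ w.takeWhile (· ≠ n), x < n := by
      intro x hx
      have := Finset.mem_Icc.mp (hLsub (List.mem_toFinset.mpr hx)); omega
    have hRlt : ∀ x ∈ (w.dropWhile (· ≠ n)).tail, x < n := by
      intro x hx
      have := Finset.mem_Icc.mp (Finset.mem_sdiff.mp
        (hRfin ▸ List.mem_toFinset.mpr hx)).1
      omega
    have hkey := one_add_des_glue hLne hLlt hRlt
    rw [hsplit] at hkey
    rw [hkey]

theorem dPoly_formula
    (n : ℕ) (hn : 2 ≤ n) :
    descPoly ((permsOf n).filter (fun w => w.idxOf (n - 1) < w.idxOf n)) =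
      Polynomial.C (1 / 2 : ℚ) *
        ∑ i ∈ Finset.range n,
          (Nat.choose (n - 1) i : Polynomial ℚ) *
            (eulerianPoly i * eulerianPoly (n - 1 - i)) := by
  set Ic := Finset.Icc 1 (n - 1) with hIc
  set c : ℕ → Polynomial ℚ := fun i => eulerianPoly i * eulerianPoly (n - 1 - i) with hc
  have hIcCard : Ic.card = n - 1 := by rw [hIc, Nat.card_Icc]; omega
  have hA : descPoly ((permsOf n).filter (fun w => w.idxOf (n - 1) < w.idxOf n))
      = ∑ S ∈ Ic.powerset.filter (fun S => n - 1 ∈ S), c S.card := by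
    rw [descPoly_filter_eq n hn, Finset.sum_sigma]
    refine Finset.sum_congr rfl fun S hS => ?_
    have hsub : S ⊆ Ic := Finset.mem_powerset.mp (Finset.mem_filter.mp hS).1
    have hcard : (Ic \ S).card = n - 1 - S.card := by
      rw [Finset.card_sdiff_of_subset hsub, hIcCard]
    rw [Finset.sum_product]
    simp_rw [pow_add]
    rw [← Finset.sum_mul_sum]
    rw [sum_perm_pow (Finset.sort_nodup S (· ≤ ·)),
      sum_perm_pow (Finset.sort_nodup (Ic \ S) (· ≤ ·)),
      Finset.length_sort, Finset.length_sort, hcard]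
  have hB : ∑ S ∈ Ic.powerset.filter (fun S => ¬ n - 1 ∈ S), c S.card
      = ∑ S ∈ Ic.powerset.filter (fun S => n - 1 ∈ S), c S.card := by
    have hmemIc : n - 1 ∈ Ic := Finset.mem_Icc.mpr ⟨by omega, le_rfl⟩
    refine Finset.sum_nbij' (fun S => Ic \ S) (fun S => Ic \ S) ?_ ?_ ?_ ?_ ?_
    · intro S hS
      obtain ⟨hsub, hmem⟩ := Finset.mem_filter.mp hS
      exact Finset.mem_filter.mpr ⟨Finset.mem_powerset.mpr (Finset.sdiff_subset),
        Finset.mem_sdiff.mpr ⟨hmemIc, hmem⟩⟩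
    · intro S hS
      obtain ⟨hsub, hmem⟩ := Finset.mem_filter.mp hS
      refine Finset.mem_filter.mpr ⟨Finset.mem_powerset.mpr (Finset.sdiff_subset), ?_⟩
      simp only [Finset.mem_sdiff, not_and, not_not]
      intro _; exact hmem
    · intro S hS
      exact Finset.sdiff_sdiff_eq_self
        (Finset.mem_powerset.mp (Finset.mem_filter.mp hS).1)
    · intro S hS
      exact Finset.sdiff_sdiff_eq_self
        (Finset.mem_powerset.mp (Finset.mem_filter.mp hS).1)
    · intro S hS
      have hsub : S ⊆ Ic := Finset.mem_powerset.mp (Finset.mem_filter.mp hS).1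
      have h1 : (Ic \ S).card = n - 1 - S.card := by
        rw [Finset.card_sdiff_of_subset hsub, hIcCard]
      have h2 : S.card ≤ n - 1 := hIcCard ▸ Finset.card_le_card hsub
      rw [hc]
      simp only [h1]
      rw [show n - 1 - (n - 1 - S.card) = S.card from by omega, mul_comm]
  have hD : ∑ S ∈ Ic.powerset, c S.card
      = ∑ i ∈ Finset.range n, (Nat.choose (n - 1) i : Polynomial ℚ) * c i := by
    rw [Finset.sum_powerset, hIcCard, show n - 1 + 1 = n from by omega]
    refine Finset.sum_congr rfl fun j hj => ?_
    calc ∑ S ∈ Finset.powersetCard j Ic, c S.card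
        = ∑ _S ∈ Finset.powersetCard j Ic, c j :=
          Finset.sum_congr rfl fun S hS => by rw [(Finset.mem_powersetCard.mp hS).2]
      _ = (Finset.powersetCard j Ic).card • c j := Finset.sum_const _
      _ = (Nat.choose (n - 1) j : Polynomial ℚ) * c j := by
          rw [Finset.card_powersetCard, hIcCard, nsmul_eq_mul]
  have hsplit := Finset.sum_filter_add_sum_filter_not Ic.powerset
    (fun S => n - 1 ∈ S) (fun S => c S.card)
  rw [hA]
  rw [show (∑ i ∈ Finset.range n, (Nat.choose (n - 1) i : Polynomial ℚ) *
      (eulerianPoly i * eulerianPoly (n - 1 - i)))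
    = ∑ S ∈ Ic.powerset, c S.card from hD.symm]
  rw [← hsplit, hB, ← two_mul, ← mul_assoc]
  rw [show Polynomial.C (1 / 2 : ℚ) * 2 = 1 from by
    rw [show (2 : Polynomial ℚ) = Polynomial.C (2 : ℚ) from (map_ofNat Polynomial.C 2).symm,
      ← Polynomial.C_mul]
    norm_num]
  rw [one_mul]
end
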